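/- Fix t ∈ [0,δ) and x ∈ ℝ with 0 < x < r_t − r_δ, and define h(y) := −∫_0^y g(v) dv − (x−y)²/(2 r_t), q(y) := (x−y)/r_t + 1, y₂* := x + r_t and B₂ := −(r_t − r_δ + x)/√(2 r_t). Then for every λ ≥ 1, ∫_{−r_δ}^{r_δ} |q(y)|·exp(λ·h(y)) dy ≤ √(2π·r_t·r_δ/(λ·(r_t − r_δ)))·exp(λ·h(y₂*))·(exp(−2λx) + exp(−λ·B₂²)); moreover B₂² ≥ max(x²/(2 r_t), (r_t − r_δ)²/(2 r_t)). -/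

import Mathlib

open MeasureTheory

set_option maxHeartbeats 1600000 in
/-- Bound for the middle integral in the Laplace-method estimate: for `λ ≥ 1`,
`∫_{−r_δ}^{r_δ} |q(y)|·e^{λh(y)} dy ≤ √(2π r_t r_δ/(λ(r_t−r_δ)))·e^{λh(y₂*)}·(e^{−2λx} + e^{−λB₂²})`,
together with `B₂² ≥ max(x²/(2r_t), (r_t−r_δ)²/(2r_t))`. -/
theorem laplace_middle_integral_bound
    (T κ δ : ℝ) (hT : 0 < T) (hδ : δ ∈ Set.Ioo 0 T)
    (η w r g : ℝ → ℝ)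
    (hη : ∀ t ∈ Set.Icc (0:ℝ) T,
      HasDerivWithinAt η (η t ^ 2 - 2 * κ * η t - 1) (Set.Icc (0:ℝ) T) t)
    (hηT : η T = 1)
    (hw : ∀ t, w t = Real.exp (∫ s in t..T, (-κ + η s)))
    (hr : ∀ t, r t = ∫ s in t..T, ((w s) ^ 2)⁻¹)
    (hrδ : 0 < r δ)
    (hg : ∀ x, g x = if |x| ≤ r δ then -x / r δ else -Real.sign x)
    (t x : ℝ) (ht : t ∈ Set.Ico (0:ℝ) δ) (hx : 0 < x) (hx' : x < r t - r δ)
    (h q : ℝ → ℝ)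
    (hh : ∀ y : ℝ, h y = -(∫ v in (0:ℝ)..y, g v) - (x - y) ^ 2 / (2 * r t))
    (hq : ∀ y : ℝ, q y = (x - y) / r t + 1)
    (B₂ : ℝ) (hB₂ : B₂ = -((r t - r δ + x) / Real.sqrt (2 * r t))) :
    ∀ lam : ℝ, 1 ≤ lam →
      (∫ y in (-(r δ))..(r δ), |q y| * Real.exp (lam * h y)) ≤
        Real.sqrt (2 * Real.pi * r t * r δ / (lam * (r t - r δ))) *
          Real.exp (lam * h (x + r t)) *
          (Real.exp (-(2 * lam * x)) + Real.exp (-(lam * B₂ ^ 2))) ∧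
      max (x ^ 2 / (2 * r t)) ((r t - r δ) ^ 2 / (2 * r t)) ≤ B₂ ^ 2 := by
  intro lam hlam
  have hlam0 : (0:ℝ) < lam := lt_of_lt_of_le one_pos hlam
  set D := r δ with hDdef
  set R := r t with hRdef
  have hD0 : 0 < D := hrδ
  have hDR : D < R := by linarith
  have hR0 : 0 < R := lt_trans hD0 hDR
  have hRD : 0 < R - D := by linarith
  -- B₂ squared
  have hB2sq : B₂ ^ 2 = (R - D + x) ^ 2 / (2 * R) := by
    rw [hB₂, neg_sq, div_pow, Real.sq_sqrt (by linarith : (0:ℝ) ≤ 2 * R)]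
  -- second conjunct
  have hconj2 : max (x ^ 2 / (2 * R)) ((R - D) ^ 2 / (2 * R)) ≤ B₂ ^ 2 := by
    rw [hB2sq]
    apply max_le
    · rw [div_le_div_iff₀ (by linarith) (by linarith)]
      nlinarith [mul_nonneg hR0.le (sq_nonneg (R - D)), mul_nonneg (mul_nonneg hR0.le hx.le) hRD.le]
    · rw [div_le_div_iff₀ (by linarith) (by linarith)]
      nlinarith [mul_nonneg hR0.le (sq_nonneg x), mul_nonneg (mul_nonneg hR0.le hx.le) hRD.le]
  refine ⟨?_, hconj2⟩
  -- g on the small interval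
  have hg_small : ∀ v : ℝ, |v| ≤ D → g v = -v / D := by
    intro v hv; rw [hg]; simp [hv]
  -- integral of g on [-D,D]
  have hint_g : ∀ y ∈ Set.Icc (-D) D, (∫ v in (0:ℝ)..y, g v) = -(y ^ 2) / (2 * D) := by
    intro y hy
    have hsub : Set.uIcc (0:ℝ) y ⊆ Set.Icc (-D) D :=
      Set.uIcc_subset_Icc ⟨by linarith, hD0.le⟩ hy
    have h1 : Set.EqOn g (fun v => -v / D) (Set.uIcc 0 y) := by
      intro v hv
      have hv' := hsub hv
      exact hg_small v (abs_le.2 ⟨hv'.1, hv'.2⟩)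
    rw [intervalIntegral.integral_congr h1]
    simp only [neg_div]
    rw [intervalIntegral.integral_neg, intervalIntegral.integral_div,
      integral_id]
    ring
  -- h formula on [-D, D]
  have hH : ∀ y ∈ Set.Icc (-D) D,
      h y = y ^ 2 / (2 * D) - (x - y) ^ 2 / (2 * R) := by
    intro y hy
    rw [hh y, hint_g y hy]
    ring
  -- integrability of g on [0, D]
  have hig1 : IntervalIntegrable g volume 0 D := by
    rw [intervalIntegrable_iff, Set.uIoc_of_le hD0.le]
    refine ((Continuous.integrableOn_Ioc (by fun_prop) :
      IntegrableOn (fun v : ℝ => -v / D) (Set.Ioc 0 D) volume)).congr_fun ?_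
      measurableSet_Ioc
    intro v hv
    exact (hg_small v (by rw [abs_of_pos hv.1]; exact hv.2)).symm
  -- integral of g on [D, x+R]
  have hDxR : D ≤ x + R := by linarith
  have hgval2 : ∀ v ∈ Set.uIcc D (x + R), g v = -1 := by
    intro v hv
    rw [Set.uIcc_of_le hDxR] at hv
    rcases eq_or_lt_of_le hv.1 with h1 | h1
    · rw [← h1, hg_small D (by rw [abs_of_pos hD0]), neg_div, div_self hD0.ne']
    · rw [hg]
      have habs : ¬ |v| ≤ D := by
        rw [abs_of_pos (lt_trans hD0 h1)]; exact not_le.2 h1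
      rw [if_neg habs, Real.sign_of_pos (lt_trans hD0 h1)]
  have hig2 : IntervalIntegrable g volume D (x + R) := by
    rw [intervalIntegrable_iff]
    refine ((Continuous.integrableOn_Ioc continuous_const :
      IntegrableOn (fun _ : ℝ => (-1:ℝ)) (Set.uIoc D (x + R)) volume)).congr_fun ?_
      measurableSet_uIoc
    intro v hv
    exact (hgval2 v (Set.uIoc_subset_uIcc hv)).symm
  have hval2 : (∫ v in D..(x + R), g v) = -(x + R - D) := by
    rw [intervalIntegral.integral_congr (g := fun _ => (-1:ℝ)) hgval2]
    simp
  have hg0D : (∫ v in (0:ℝ)..D, g v) = -(D / 2) := by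
    rw [hint_g D ⟨by linarith, le_refl D⟩]
    field_simp
  -- value of h at x + R
  have hstar : h (x + R) = D / 2 + (x + R - D) - R / 2 := by
    rw [hh, ← intervalIntegral.integral_add_adjacent_intervals hig1 hig2, hg0D, hval2]
    field_simp
    ring
  -- the vertex
  set y₀ : ℝ := -(x * D) / (R - D) with hy₀def
  have hy₀l : -D ≤ y₀ := by
    rw [hy₀def, neg_div, neg_le_neg_iff, div_le_iff₀ hRD]
    nlinarith
  have hy₀r : y₀ ≤ D := by
    rw [hy₀def]
    have : -(x * D) / (R - D) ≤ 0 := by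
      apply div_nonpos_of_nonpos_of_nonneg (by nlinarith) hRD.le
    linarith
  have hy₀R : (R - D) * y₀ = -(x * D) := by
    rw [hy₀def]; field_simp
  -- the Gaussian rate
  set c : ℝ := lam * (R - D) / (2 * R * D) with hcdef
  have hc0 : 0 < c := by
    apply div_pos (mul_pos hlam0 hRD) (by positivity)
  -- key pointwise exponent bound, left piece
  have keyL : ∀ y : ℝ, -D ≤ y → y ≤ y₀ →
      lam * (y ^ 2 / (2 * D) - (x - y) ^ 2 / (2 * R)) + c * (y + D) ^ 2 ≤
        lam * h (x + R) + -(2 * lam * x) := by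
    intro y h1 h2
    have hb : (R - D) * y + D * x ≤ 0 := by
      have h3 : (R - D) * y ≤ (R - D) * y₀ := mul_le_mul_of_nonneg_left h2 hRD.le
      rw [hy₀R] at h3; linarith
    have hpoly : R * y ^ 2 - D * (x - y) ^ 2 + (R - D) * (y + D) ^ 2 ≤
        2 * R * D * ((D / 2 + (x + R - D) - R / 2) - 2 * x) := by
      nlinarith [mul_nonneg (show (0:ℝ) ≤ y + D by linarith)
        (show (0:ℝ) ≤ -((R - D) * y + D * x) by linarith),
        mul_nonneg hD0.le (sq_nonneg (R - D - x))]
    have hfrac : y ^ 2 / (2 * D) - (x - y) ^ 2 / (2 * R) +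
        (R - D) / (2 * R * D) * (y + D) ^ 2 ≤ (D / 2 + (x + R - D) - R / 2) - 2 * x := by
      rw [show y ^ 2 / (2 * D) - (x - y) ^ 2 / (2 * R) +
          (R - D) / (2 * R * D) * (y + D) ^ 2 =
          (R * y ^ 2 - D * (x - y) ^ 2 + (R - D) * (y + D) ^ 2) / (2 * R * D) from by
        field_simp]
      rw [div_le_iff₀ (by positivity)]
      nlinarith [hpoly]
    have hmul := mul_le_mul_of_nonneg_left hfrac hlam0.le
    rw [hstar, hcdef]
    linear_combination hmul
  -- key pointwise exponent bound, right piece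
  have keyR : ∀ y : ℝ, y₀ ≤ y → y ≤ D →
      lam * (y ^ 2 / (2 * D) - (x - y) ^ 2 / (2 * R)) + c * (D - y) ^ 2 ≤
        lam * h (x + R) + -(lam * B₂ ^ 2) := by
    intro y h1 h2
    have hb : 0 ≤ (R - D) * y + D * x := by
      have h3 : (R - D) * y₀ ≤ (R - D) * y := mul_le_mul_of_nonneg_left h1 hRD.le
      rw [hy₀R] at h3; linarith
    have hpoly : R * y ^ 2 - D * (x - y) ^ 2 + (R - D) * (D - y) ^ 2 ≤
        2 * R * D * ((D / 2 + (x + R - D) - R / 2) - (R - D + x) ^ 2 / (2 * R)) := by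
      have hexp : 2 * R * D * ((D / 2 + (x + R - D) - R / 2) - (R - D + x) ^ 2 / (2 * R)) =
          R * D ^ 2 + 2 * R * D * (x + R - D) - R ^ 2 * D - D * (R - D + x) ^ 2 := by
        field_simp
      rw [hexp]
      nlinarith [mul_nonneg (show (0:ℝ) ≤ D - y by linarith) hb]
    have hfrac : y ^ 2 / (2 * D) - (x - y) ^ 2 / (2 * R) +
        (R - D) / (2 * R * D) * (D - y) ^ 2 ≤
        (D / 2 + (x + R - D) - R / 2) - (R - D + x) ^ 2 / (2 * R) := by
      rw [show y ^ 2 / (2 * D) - (x - y) ^ 2 / (2 * R) +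
          (R - D) / (2 * R * D) * (D - y) ^ 2 =
          (R * y ^ 2 - D * (x - y) ^ 2 + (R - D) * (D - y) ^ 2) / (2 * R * D) from by
        field_simp]
      rw [div_le_iff₀ (by positivity)]
      nlinarith [hpoly]
    have hmul := mul_le_mul_of_nonneg_left hfrac hlam0.le
    rw [hstar, hcdef, hB2sq]
    linear_combination hmul
  -- bound on |q|
  have hqb : ∀ y : ℝ, -D ≤ y → y ≤ D → |(x - y) / R + 1| ≤ 2 := by
    intro y h1 h2
    rw [abs_of_nonneg]
    · have : (x - y) / R ≤ 1 := by rw [div_le_one hR0]; linarith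
      linarith
    · have : -1 ≤ (x - y) / R := by rw [le_div_iff₀ hR0]; linarith
      linarith
  -- replace the integrand by an explicit continuous function
  set F : ℝ → ℝ := fun y =>
    |(x - y) / R + 1| * Real.exp (lam * (y ^ 2 / (2 * D) - (x - y) ^ 2 / (2 * R))) with hFdef
  have hFc : Continuous F := by
    apply Continuous.mul
    · apply Continuous.abs; fun_prop
    · fun_prop
  have hcong : (∫ y in (-D)..D, |q y| * Real.exp (lam * h y)) = ∫ y in (-D)..D, F y := by
    apply intervalIntegral.integral_congr
    intro y hy
    rw [Set.uIcc_of_le (by linarith : -D ≤ D)] at hy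
    show |q y| * Real.exp (lam * h y) = F y
    rw [hq y, hH y hy, hFdef]
  -- split
  have hsplit : (∫ y in (-D)..D, F y) =
      (∫ y in (-D)..y₀, F y) + ∫ y in y₀..D, F y :=
    (intervalIntegral.integral_add_adjacent_intervals
      (hFc.intervalIntegrable _ _) (hFc.intervalIntegrable _ _)).symm
  -- Gaussian tail bounds
  have hgauss_int : Integrable (fun u : ℝ => Real.exp (-(c * u ^ 2))) := by
    simpa [neg_mul] using integrable_exp_neg_mul_sq hc0
  have hhalf : ∀ b : ℝ, 0 ≤ b →
      (∫ u in (0:ℝ)..b, Real.exp (-(c * u ^ 2))) ≤ Real.sqrt (Real.pi / c) / 2 := by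
    intro b hb
    rw [intervalIntegral.integral_of_le hb]
    have hmono : (∫ u in Set.Ioc (0:ℝ) b, Real.exp (-(c * u ^ 2))) ≤
        ∫ u in Set.Ioi (0:ℝ), Real.exp (-(c * u ^ 2)) := by
      apply setIntegral_mono_set hgauss_int.integrableOn
      · exact Filter.Eventually.of_forall fun u => (Real.exp_pos _).le
      · exact (Set.Ioc_subset_Ioi_self).eventuallyLE
    refine hmono.trans ?_
    rw [show (fun u : ℝ => Real.exp (-(c * u ^ 2))) = fun u : ℝ => Real.exp (-c * u ^ 2)
      from by funext u; rw [neg_mul]]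
    rw [integral_gaussian_Ioi c]
  have hG1 : (∫ y in (-D)..y₀, Real.exp (-(c * (y + D) ^ 2))) ≤
      Real.sqrt (Real.pi / c) / 2 := by
    have he : (∫ y in (-D)..y₀, Real.exp (-(c * (y + D) ^ 2))) =
        ∫ u in (0:ℝ)..(y₀ + D), Real.exp (-(c * u ^ 2)) := by
      have := intervalIntegral.integral_comp_add_right
        (a := -D) (b := y₀) (fun u => Real.exp (-(c * u ^ 2))) D
      simpa using this
    rw [he]
    exact hhalf _ (by linarith)
  have hG2 : (∫ y in y₀..D, Real.exp (-(c * (D - y) ^ 2))) ≤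
      Real.sqrt (Real.pi / c) / 2 := by
    have he : (∫ y in y₀..D, Real.exp (-(c * (D - y) ^ 2))) =
        ∫ u in (0:ℝ)..(D - y₀), Real.exp (-(c * u ^ 2)) := by
      have := intervalIntegral.integral_comp_sub_left
        (a := y₀) (b := D) (fun u => Real.exp (-(c * u ^ 2))) D
      simpa using this
    rw [he]
    exact hhalf _ (by linarith)
  -- bound piece 1
  have hb1 : (∫ y in (-D)..y₀, F y) ≤
      Real.exp (lam * h (x + R) + -(2 * lam * x)) * Real.sqrt (Real.pi / c) := by
    have hmono : (∫ y in (-D)..y₀, F y) ≤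
        ∫ y in (-D)..y₀, 2 * Real.exp (lam * h (x + R) + -(2 * lam * x)) *
          Real.exp (-(c * (y + D) ^ 2)) := by
      apply intervalIntegral.integral_mono_on hy₀l (hFc.intervalIntegrable _ _)
        (Continuous.intervalIntegrable (by fun_prop) _ _)
      intro y hy
      have h1 := hqb y hy.1 (le_trans hy.2 hy₀r)
      have h2 : Real.exp (lam * (y ^ 2 / (2 * D) - (x - y) ^ 2 / (2 * R))) ≤
          Real.exp (lam * h (x + R) + -(2 * lam * x)) * Real.exp (-(c * (y + D) ^ 2)) := by
        rw [← Real.exp_add]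
        apply Real.exp_le_exp.2
        linarith [keyL y hy.1 hy.2]
      calc F y ≤ 2 * (Real.exp (lam * h (x + R) + -(2 * lam * x)) *
            Real.exp (-(c * (y + D) ^ 2))) := by
            apply mul_le_mul h1 h2 (Real.exp_pos _).le (by norm_num)
        _ = 2 * Real.exp (lam * h (x + R) + -(2 * lam * x)) *
            Real.exp (-(c * (y + D) ^ 2)) := by ring
    refine hmono.trans ?_
    rw [intervalIntegral.integral_const_mul]
    calc 2 * Real.exp (lam * h (x + R) + -(2 * lam * x)) *
          (∫ y in (-D)..y₀, Real.exp (-(c * (y + D) ^ 2))) ≤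
        2 * Real.exp (lam * h (x + R) + -(2 * lam * x)) * (Real.sqrt (Real.pi / c) / 2) := by
          apply mul_le_mul_of_nonneg_left hG1 (by positivity)
      _ = Real.exp (lam * h (x + R) + -(2 * lam * x)) * Real.sqrt (Real.pi / c) := by ring
  -- bound piece 2
  have hb2 : (∫ y in y₀..D, F y) ≤
      Real.exp (lam * h (x + R) + -(lam * B₂ ^ 2)) * Real.sqrt (Real.pi / c) := by
    have hmono : (∫ y in y₀..D, F y) ≤
        ∫ y in y₀..D, 2 * Real.exp (lam * h (x + R) + -(lam * B₂ ^ 2)) *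
          Real.exp (-(c * (D - y) ^ 2)) := by
      apply intervalIntegral.integral_mono_on hy₀r (hFc.intervalIntegrable _ _)
        (Continuous.intervalIntegrable (by fun_prop) _ _)
      intro y hy
      have h1 := hqb y (le_trans hy₀l hy.1) hy.2
      have h2 : Real.exp (lam * (y ^ 2 / (2 * D) - (x - y) ^ 2 / (2 * R))) ≤
          Real.exp (lam * h (x + R) + -(lam * B₂ ^ 2)) * Real.exp (-(c * (D - y) ^ 2)) := by
        rw [← Real.exp_add]
        apply Real.exp_le_exp.2
        linarith [keyR y hy.1 hy.2]
      calc F y ≤ 2 * (Real.exp (lam * h (x + R) + -(lam * B₂ ^ 2)) *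
            Real.exp (-(c * (D - y) ^ 2))) := by
            apply mul_le_mul h1 h2 (Real.exp_pos _).le (by norm_num)
        _ = 2 * Real.exp (lam * h (x + R) + -(lam * B₂ ^ 2)) *
            Real.exp (-(c * (D - y) ^ 2)) := by ring
    refine hmono.trans ?_
    rw [intervalIntegral.integral_const_mul]
    calc 2 * Real.exp (lam * h (x + R) + -(lam * B₂ ^ 2)) *
          (∫ y in y₀..D, Real.exp (-(c * (D - y) ^ 2))) ≤
        2 * Real.exp (lam * h (x + R) + -(lam * B₂ ^ 2)) * (Real.sqrt (Real.pi / c) / 2) := by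
          apply mul_le_mul_of_nonneg_left hG2 (by positivity)
      _ = Real.exp (lam * h (x + R) + -(lam * B₂ ^ 2)) * Real.sqrt (Real.pi / c) := by ring
  -- the constant
  have hS : Real.sqrt (2 * Real.pi * R * D / (lam * (R - D))) = Real.sqrt (Real.pi / c) := by
    congr 1
    rw [hcdef]
    field_simp
  calc (∫ y in (-D)..D, |q y| * Real.exp (lam * h y)) = ∫ y in (-D)..D, F y := hcong
    _ = (∫ y in (-D)..y₀, F y) + ∫ y in y₀..D, F y := hsplit
    _ ≤ Real.exp (lam * h (x + R) + -(2 * lam * x)) * Real.sqrt (Real.pi / c) +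
        Real.exp (lam * h (x + R) + -(lam * B₂ ^ 2)) * Real.sqrt (Real.pi / c) :=
        add_le_add hb1 hb2
    _ = Real.sqrt (Real.pi / c) * Real.exp (lam * h (x + R)) *
        (Real.exp (-(2 * lam * x)) + Real.exp (-(lam * B₂ ^ 2))) := by
        rw [Real.exp_add, Real.exp_add]; ring
    _ = Real.sqrt (2 * Real.pi * R * D / (lam * (R - D))) * Real.exp (lam * h (x + R)) *
        (Real.exp (-(2 * lam * x)) + Real.exp (-(lam * B₂ ^ 2))) := by rw [hS]
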